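/- Let B be an n×n upper Hessenberg matrix (b_{ij} = 0 unless i ≤ j+1) over a (possibly noncommutative) ring, in which every subdiagonal entry b_{i+1,i} commutes with all entries of B. Define the left-to-right determinant det→(B) = Σ_{w ∈ S_n} sign(w) · b_{w(1),1} · b_{w(2),2} ⋯ b_{w(n),n}. Fix q ∈ {1,…,n−1} and set T = −b_{q+1,q}. Then det→(B) = T · det→(B'') + det→(B'), where B' is obtained from B by replacing b_{q+1,q} with 0, and B'' is the (n−1)×(n−1) matrix obtained from B by deleting row q+1 and column q. -/

import Mathlib

/-- The left-to-right (column-ordered) noncommutative determinant. -/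
noncomputable def detLR {n : ℕ} {R : Type*} [Ring R] (B : Matrix (Fin n) (Fin n) R) : R :=
  ∑ w : Equiv.Perm (Fin n),
    ((Equiv.Perm.sign w : ℤ) • (List.ofFn (fun i => B (w i) i)).prod)

private lemma prod_ofFn_succAbove {M : Type*} [Monoid M] :
    ∀ {n : ℕ} (a : Fin (n + 1)) (g : Fin (n + 1) → M),
      (∀ i, Commute (g a) (g i)) →
      (List.ofFn g).prod = g a * (List.ofFn fun j => g (a.succAbove j)).prod := by
  intro n
  induction n with
  | zero =>
    intro a g _
    have ha : a = 0 := Fin.fin_one_eq_zero a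
    subst ha
    simp
  | succ n ih =>
    intro a g hc
    induction a using Fin.cases with
    | zero =>
      rw [List.ofFn_succ, List.prod_cons]
      simp [Fin.zero_succAbove]
    | succ a' =>
      rw [List.ofFn_succ, List.prod_cons,
        ih a' (fun j => g j.succ) (fun i => hc i.succ)]
      have hlist : (List.ofFn fun j : Fin (n + 1) => g (a'.succ.succAbove j)) =
          g 0 :: List.ofFn fun j : Fin n => g (a'.succAbove j).succ := by
        rw [List.ofFn_succ]
        simp [Fin.succ_succAbove_zero, Fin.succ_succAbove_succ]
      rw [hlist, List.prod_cons, ← mul_assoc, ← mul_assoc, (hc 0).eq]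

/-- Cofactor-type expansion of the left-to-right determinant of an upper Hessenberg matrix
at the subdiagonal entry `b_{q+1,q}`. -/
theorem stmt0 {R : Type*} [Ring R] {n : ℕ} (B : Matrix (Fin (n + 1)) (Fin (n + 1)) R)
    (hHess : ∀ i j : Fin (n + 1), (j : ℕ) + 1 < (i : ℕ) → B i j = 0)
    (hcomm : ∀ i : Fin n, ∀ k l : Fin (n + 1),
      Commute (B i.succ i.castSucc) (B k l))
    (q : Fin n) :
    detLR B =
      (-(B q.succ q.castSucc)) *
          detLR (B.submatrix q.succ.succAbove q.castSucc.succAbove) +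
        detLR (Matrix.of fun i j =>
          if i = q.succ ∧ j = q.castSucc then 0 else B i j) := by
  classical
  set a : Fin (n + 1) := q.castSucc with ha
  set b : Fin (n + 1) := q.succ with hb
  have hab : a ≠ b := (Fin.castSucc_lt_succ (i := q)).ne
  set t : Equiv.Perm (Fin (n + 1)) → R :=
    fun w => ((Equiv.Perm.sign w : ℤ) • (List.ofFn (fun i => B (w i) i)).prod) with ht
  set Φ : Equiv.Perm (Fin n) → Equiv.Perm (Fin (n + 1)) :=
    fun σ => ((finSuccEquiv' a).trans σ.optionCongr).trans (finSuccEquiv' b).symm with hΦ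
  have hΦa : ∀ σ, Φ σ a = b := by
    intro σ
    simp [hΦ, finSuccEquiv'_at, finSuccEquiv'_symm_none]
  have hΦs : ∀ σ (j : Fin n), Φ σ (a.succAbove j) = b.succAbove (σ j) := by
    intro σ j
    simp [hΦ, finSuccEquiv'_succAbove, finSuccEquiv'_symm_some]
  have hkey : ∀ j : Fin n, j ≠ q → b.succAbove j = a.succAbove j := by
    intro j hj
    rcases hj.lt_or_gt with h | h
    · rw [Fin.succAbove_of_castSucc_lt, Fin.succAbove_of_castSucc_lt]
      · exact Fin.castSucc_lt_castSucc_iff.mpr h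
      · exact lt_trans (Fin.castSucc_lt_castSucc_iff.mpr h) (Fin.castSucc_lt_succ (i := q))
    · rw [Fin.succAbove_of_le_castSucc, Fin.succAbove_of_le_castSucc]
      · exact Fin.castSucc_le_castSucc_iff.mpr h.le
      · rw [hb, Fin.succ_le_castSucc_iff]
        exact h
  have haq : a.succAbove q = b := by
    rw [Fin.succAbove_of_le_castSucc _ _ le_rfl]
  have hbq : b.succAbove q = a := by
    rw [Fin.succAbove_of_castSucc_lt _ _ (Fin.castSucc_lt_succ (i := q))]
  have hsign : ∀ σ : Equiv.Perm (Fin n),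
      Equiv.Perm.sign (Φ σ) = - Equiv.Perm.sign σ := by
    intro σ
    have hmul : Φ σ =
        ((finSuccEquiv' b).symm.permCongr σ.optionCongr) *
          (((finSuccEquiv' a).trans (finSuccEquiv' b).symm : Equiv.Perm (Fin (n + 1)))) := by
      ext x
      simp [hΦ, Equiv.Perm.mul_apply, Equiv.permCongr_apply]
    have hc : ((finSuccEquiv' a).trans (finSuccEquiv' b).symm : Equiv.Perm (Fin (n + 1))) =
        Equiv.swap a b := by
      ext x
      rcases eq_or_ne x a with rfl | hxa
      · simp [finSuccEquiv'_at, finSuccEquiv'_symm_none, Equiv.swap_apply_left]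
      rcases eq_or_ne x b with rfl | hxb
      · have h1 : (finSuccEquiv' a) b = some q := by
          rw [← haq]; exact finSuccEquiv'_succAbove a q
        rw [Equiv.trans_apply, h1, finSuccEquiv'_symm_some, hbq, Equiv.swap_apply_right]
      · obtain ⟨j, hj⟩ := Fin.exists_succAbove_eq hxa
        have hjq : j ≠ q := by
          rintro rfl
          apply hxb
          rw [← hj]; exact haq
        rw [Equiv.trans_apply, ← hj, finSuccEquiv'_succAbove, finSuccEquiv'_symm_some,
          hkey j hjq, hj, Equiv.swap_apply_of_ne_of_ne hxa hxb]
    rw [hmul, map_mul, hc, Equiv.Perm.sign_permCongr, Equiv.optionCongr_sign,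
      Equiv.Perm.sign_swap hab, mul_neg_one]
  have hsplit := Finset.sum_filter_add_sum_filter_not Finset.univ
    (fun w : Equiv.Perm (Fin (n + 1)) => w a = b) t
  have hdet : detLR B = (∑ w ∈ Finset.univ.filter
      (fun w : Equiv.Perm (Fin (n + 1)) => w a = b), t w) +
      ∑ w ∈ Finset.univ.filter
      (fun w : Equiv.Perm (Fin (n + 1)) => ¬ w a = b), t w := by
    rw [hsplit]; rfl
  have hS1 : (∑ w ∈ Finset.univ.filter
      (fun w : Equiv.Perm (Fin (n + 1)) => w a = b), t w) =
      (-(B b a)) * detLR (B.submatrix b.succAbove a.succAbove) := by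
    have hre : (∑ σ : Equiv.Perm (Fin n), t (Φ σ)) =
        ∑ w ∈ Finset.univ.filter
          (fun w : Equiv.Perm (Fin (n + 1)) => w a = b), t w := by
      apply Finset.sum_bij (fun (σ : Equiv.Perm (Fin n)) (_ : σ ∈ Finset.univ) => Φ σ)
      · intro σ _
        exact Finset.mem_filter.mpr ⟨Finset.mem_univ _, hΦa σ⟩
      · intro σ₁ _ σ₂ _ h
        ext j
        have hjh := congrArg (fun w : Equiv.Perm (Fin (n + 1)) => w (a.succAbove j)) h
        simp only [hΦs] at hjh
        exact congrArg Fin.val (Fin.succAbove_right_injective hjh)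
      · intro w hw
        have hw' : w a = b := (Finset.mem_filter.mp hw).2
        set O : Equiv.Perm (Option (Fin n)) :=
          ((finSuccEquiv' a).symm.trans w).trans (finSuccEquiv' b) with hO
        have hOnone : O none = none := by
          simp [hO, finSuccEquiv'_symm_none, hw', finSuccEquiv'_at]
        refine ⟨Equiv.removeNone O, Finset.mem_univ _, ?_⟩
        have hcongr : (Equiv.removeNone O).optionCongr = O := by
          rw [map_equiv_removeNone, hOnone, Equiv.swap_self]
          ext x
          simp
        ext x
        simp [hΦ, hcongr, hO, hw', finSuccEquiv'_at]
      · intro σ _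
        rfl
    rw [← hre, detLR, Finset.mul_sum]
    apply Finset.sum_congr rfl
    intro σ _
    rw [ht]
    simp only [hsign]
    have hprod : (List.ofFn fun i => B ((Φ σ) i) i).prod =
        B b a * (List.ofFn fun j => B.submatrix b.succAbove a.succAbove (σ j) j).prod := by
      rw [prod_ofFn_succAbove a (fun i => B ((Φ σ) i) i) ?hcm]
      case hcm =>
        intro i
        simp only [hΦa]
        exact hcomm q _ _
      simp only [hΦa, hΦs, Matrix.submatrix_apply]
    rw [hprod]
    push_cast
    rw [neg_smul, neg_mul, mul_smul_comm]
  have hS2 : (∑ w ∈ Finset.univ.filter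
      (fun w : Equiv.Perm (Fin (n + 1)) => ¬ w a = b), t w) =
      detLR (Matrix.of fun i j => if i = b ∧ j = a then 0 else B i j) := by
    rw [detLR, ← Finset.sum_filter_add_sum_filter_not Finset.univ
      (fun w : Equiv.Perm (Fin (n + 1)) => w a = b)]
    have hzero : ∀ w ∈ Finset.univ.filter
        (fun w : Equiv.Perm (Fin (n + 1)) => w a = b),
        ((Equiv.Perm.sign w : ℤ) • (List.ofFn (fun i =>
          (Matrix.of fun i j => if i = b ∧ j = a then 0 else B i j) (w i) i)).prod) = 0 := by
      intro w hw
      have hw' : w a = b := (Finset.mem_filter.mp hw).2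
      have hmem : (0 : R) ∈ List.ofFn (fun i =>
          (Matrix.of fun i j => if i = b ∧ j = a then 0 else B i j) (w i) i) := by
        rw [List.mem_ofFn]
        exact ⟨a, by simp [hw']⟩
      rw [List.prod_eq_zero hmem, smul_zero]
    rw [Finset.sum_eq_zero hzero, zero_add]
    apply Finset.sum_congr rfl
    intro w hw
    have hw' : ¬ w a = b := by
      simpa using (Finset.mem_filter.mp hw).2
    rw [ht]
    have hfun : (List.ofFn fun i =>
        (Matrix.of fun i j => if i = b ∧ j = a then 0 else B i j) (w i) i)
        = List.ofFn fun i => B (w i) i := by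
      refine congrArg List.ofFn (funext fun i => ?_)
      rcases eq_or_ne i a with rfl | hi
      · simp [Matrix.of_apply, hw']
      · simp [Matrix.of_apply, hi]
    rw [hfun]
  rw [hdet, hS1, hS2]
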